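/- Characterization of F_γ: a Dyck word d (of length 2n, n ≥ 1) satisfies d·b ∈ F_γ if and only if (1) d is symmetric, i.e., Sym(d) = d, and (2) d·b is uniquely decomposable into two palindromes, i.e., there is exactly one pair (π₁, π₂) of palindromes with d·b = π₁·π₂. -/

import Mathlib

/-- The two-letter alphabet {a, b}. -/
inductive Letter : Type
  | a : Letter
  | b : Letter
deriving DecidableEq, BEq, Repr

/-- Words over the alphabet {a, b}. -/
abbrev Word := List Letter

/-- δ(w) = |w|_a − |w|_b. -/
def delta (w : Word) : ℤ := (w.count Letter.a : ℤ) - (w.count Letter.b : ℤ)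

/-- A Dyck word: δ(w) = 0 and δ(p) ≥ 0 for every prefix p of w. -/
def IsDyck (w : Word) : Prop := delta w = 0 ∧ ∀ p : Word, p <+: w → 0 ≤ delta p

/-- Membership in D_n: w = d·b with d a Dyck word of length 2n. -/
def InD (n : ℕ) (w : Word) : Prop :=
  ∃ d : Word, IsDyck d ∧ d.length = 2 * n ∧ w = d ++ [Letter.b]

/-- Exchanging the letters a and b. -/
def Letter.flip : Letter → Letter
  | .a => .b
  | .b => .a

/-- The complement w̄ of a word w. -/
def comp (w : Word) : Word := w.map Letter.flip

/-- Sym(w): the complement of the mirror (reversal) of w. -/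
def sym (w : Word) : Word := comp w.reverse

/-- A palindrome: a word equal to its mirror. -/
def Palindrome (w : Word) : Prop := w.reverse = w

/-- w' is a conjugate of w: w = u·v and w' = v·u. -/
def Conj (w w' : Word) : Prop := ∃ u v : Word, w = u ++ v ∧ w' = v ++ u

/-- u is the principal prefix of w: the shortest prefix of w with δ(u) maximal. -/
def IsPrincipalPrefix (u w : Word) : Prop :=
  u <+: w ∧ (∀ p : Word, p <+: w → delta p ≤ delta u) ∧
    (∀ p : Word, p <+: w → delta p = delta u → u.length ≤ p.length)

/-- The graph of the map γ: writing w = u·v·b with u the principal prefix of w,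
    γ(w) = v̄·b·ū. -/
def GammaRel (w w' : Word) : Prop :=
  ∃ u v : Word, IsPrincipalPrefix u w ∧ w = u ++ v ++ [Letter.b] ∧
    w' = comp v ++ [Letter.b] ++ comp u

/-- F_n: the fixed points of γ in D_n. -/
def InF (n : ℕ) (w : Word) : Prop := InD n w ∧ GammaRel w w

/-- F_γ = ⋃_{n ≥ 1} F_n. -/
def InFgamma (w : Word) : Prop := ∃ n : ℕ, 1 ≤ n ∧ InF n w

/-- x^y: concatenation of the word x with itself y times. -/
def wpow (x : Word) : ℕ → Word
  | 0 => []
  | k + 1 => x ++ wpow x k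

namespace FGaux

def F (w : Word) (k : ℕ) : Letter := w.getD k Letter.a

lemma flip_flip (c : Letter) : c.flip.flip = c := by cases c <;> rfl

lemma flip_ne (c : Letter) : c.flip ≠ c := by cases c <;> simp [Letter.flip]

lemma flip_inj {c c' : Letter} (h : c.flip = c'.flip) : c = c' := by
  cases c <;> cases c' <;> simp_all [Letter.flip]

lemma F_eq_getElem (w : Word) (k : ℕ) (h : k < w.length) : F w k = w[k] :=
  List.getD_eq_getElem w Letter.a h

lemma delta_append (x y : Word) : delta (x ++ y) = delta x + delta y := by
  simp [delta, List.count_append]; ring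

lemma beq_eq : (instBEqLetter : BEq Letter) = instBEqOfDecidableEq := by
  have h : instBEqLetter.beq = instBEqOfDecidableEq.beq := by
    funext x y; cases x <;> cases y <;> rfl
  calc (instBEqLetter : BEq Letter) = ⟨instBEqLetter.beq⟩ := rfl
    _ = ⟨instBEqOfDecidableEq.beq⟩ := by rw [h]
    _ = instBEqOfDecidableEq := rfl

instance : LawfulBEq Letter := by rw [beq_eq]; infer_instance

lemma delta_comp (x : Word) : delta (comp x) = - delta x := by
  have inj : Function.Injective Letter.flip := fun c c' => flip_inj
  have ha : (comp x).count Letter.a = x.count Letter.b := by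
    have := List.count_map_of_injective x Letter.flip inj Letter.b
    simpa [comp, Letter.flip, beq_eq] using this
  have hb : (comp x).count Letter.b = x.count Letter.a := by
    have := List.count_map_of_injective x Letter.flip inj Letter.a
    simpa [comp, Letter.flip, beq_eq] using this
  simp only [delta, ha, hb]; ring

lemma delta_single (c : Letter) : delta [c] = if c = Letter.a then 1 else -1 := by
  cases c <;> rfl

lemma take_succ_delta (w : Word) (j : ℕ) (h : j < w.length) :
    delta (w.take (j+1)) = delta (w.take j) + (if F w j = Letter.a then 1 else -1) := by
  have : w.take (j+1) = w.take j ++ [w[j]] := by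
    rw [List.take_succ, List.getElem?_eq_getElem h]
    rfl
  rw [this, delta_append, delta_single, F_eq_getElem w j h]


lemma ext_F {x y : Word} (hl : x.length = y.length)
    (h : ∀ j < x.length, F x j = F y j) : x = y := by
  apply List.ext_getElem hl
  intro j h1 h2
  rw [← F_eq_getElem x j h1, ← F_eq_getElem y j h2]
  exact h j h1

lemma F_reverse (x : Word) (j : ℕ) (h : j < x.length) :
    F x.reverse j = F x (x.length - 1 - j) := by
  rw [F_eq_getElem _ j (by simpa using h), F_eq_getElem x _ (by omega)]
  apply List.getElem_reverse

lemma F_take (x : Word) (i j : ℕ) (h1 : j < i) (h2 : j < x.length) :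
    F (x.take i) j = F x j := by
  rw [F_eq_getElem _ j (by simp; omega), F_eq_getElem x j h2]
  apply List.getElem_take

lemma F_drop (x : Word) (i j : ℕ) (h : i + j < x.length) :
    F (x.drop i) j = F x (i + j) := by
  rw [F_eq_getElem _ j (by simp; omega), F_eq_getElem x _ h]
  apply List.getElem_drop

lemma F_comp (x : Word) (j : ℕ) (h : j < x.length) :
    F (comp x) j = (F x j).flip := by
  rw [F_eq_getElem _ j (by simp [comp]; omega), F_eq_getElem x j h]
  simp [comp]

lemma F_append_left (x y : Word) (k : ℕ) (h : k < x.length) : F (x++y) k = F x k := by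
  rw [F_eq_getElem _ k (by simp; omega), F_eq_getElem x k h]
  exact List.getElem_append_left h

lemma F_append_right (x y : Word) (k : ℕ) (h1 : x.length ≤ k) (h2 : k < x.length + y.length) :
    F (x++y) k = F y (k - x.length) := by
  rw [F_eq_getElem _ k (by simp; omega), F_eq_getElem y _ (by omega)]
  apply List.getElem_append_right h1

/-- shift-by-p-with-flip, single defect -/
def Tp (w : Word) (n p : ℕ) : Prop :=
  (∀ j < 2*n+1, j ≠ 2*n - p → F w ((j+p) % (2*n+1)) = (F w j).flip) ∧
    F w (2*n - p) = Letter.b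

/-- cyclic reflection symmetry corresponding to palindromic cut at i -/
def CutP (w : Word) (n i : ℕ) : Prop :=
  ∀ k < 2*n+1, F w k = F w ((i + 2*n + (2*n+1) - k) % (2*n+1))

/-- explicit orbit description -/
def Orb (w : Word) (n p : ℕ) : Prop :=
  ∀ t < 2*n+1, F w ((2*n + t*p) % (2*n+1)) = if Even t then Letter.b else Letter.a

/-- pointwise form of sym d = d -/
def Sprop (w : Word) (n : ℕ) : Prop :=
  ∀ k < 2*n, F w k = (F w (2*n-1-k)).flip

lemma palindrome_iff (x : Word) :
    Palindrome x ↔ ∀ j, j < x.length → F x j = F x (x.length - 1 - j) := by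
  constructor
  · intro hx j h
    conv_lhs => rw [← hx]
    exact F_reverse x j h
  · intro hp
    apply ext_F (by simp)
    intro j h
    simp only [List.length_reverse] at h ⊢
    rw [F_reverse x j h, hp (x.length - 1 - j) (by omega)]
    congr 1
    omega

lemma cut_iff (w : Word) (n i : ℕ) (hw : w.length = 2*n+1) (hi : i ≤ 2*n+1) :
    (Palindrome (w.take i) ∧ Palindrome (w.drop i)) ↔ CutP w n i := by
  have hlt : ∀ k, k < i → (i + 2*n + (2*n+1) - k) % (2*n+1) = i-1-k := by
    intro k hk
    have e : i + 2*n + (2*n+1) - k = (i-1-k) + (2*n+1)*2 := by omega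
    rw [e, Nat.add_mul_mod_self_left, Nat.mod_eq_of_lt (by omega)]
  have hge : ∀ k, i ≤ k → k < 2*n+1 → (i + 2*n + (2*n+1) - k) % (2*n+1) = i+2*n-k := by
    intro k hk hk2
    have e : i + 2*n + (2*n+1) - k = (i+2*n-k) + (2*n+1)*1 := by omega
    rw [e, Nat.add_mul_mod_self_left, Nat.mod_eq_of_lt (by omega)]
  have hlt1 : (w.take i).length = i := by simp [hw]; omega
  have hld : (w.drop i).length = 2*n+1-i := by simp [hw]
  constructor
  · rintro ⟨h1, h2⟩ k hk
    rcases Nat.lt_or_ge k i with hki | hki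
    · rw [hlt k hki]
      have := (palindrome_iff _).1 h1 k (by omega)
      rw [F_take w i k hki (by omega), hlt1,
        F_take w i (i-1-k) (by omega) (by omega)] at this
      exact this
    · rw [hge k hki hk]
      have := (palindrome_iff _).1 h2 (k-i) (by omega)
      rw [F_drop w i (k-i) (by omega), hld,
        F_drop w i (2*n+1-i-1-(k-i)) (by omega)] at this
      rw [show i + (k-i) = k by omega, show i + (2*n+1-i-1-(k-i)) = i+2*n-k by omega] at this
      exact this
  · intro hc
    constructor
    · rw [palindrome_iff]
      intro j h
      rw [hlt1] at h
      have := hc j (by omega)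
      rw [hlt j h] at this
      rw [F_take w i j h (by omega), hlt1, F_take w i (i-1-j) (by omega) (by omega)]
      exact this
    · rw [palindrome_iff]
      intro j h
      rw [hld] at h
      have := hc (i+j) (by omega)
      rw [hge (i+j) (by omega) (by omega)] at this
      rw [F_drop w i j (by omega), hld, F_drop w i (2*n+1-i-1-j) (by omega)]
      rw [show i + (2*n+1-i-1-j) = i+2*n-(i+j) by omega]
      exact this

lemma sym_iff (d : Word) (n : ℕ) (hdl : d.length = 2*n) :
    sym d = d ↔ Sprop (d ++ [Letter.b]) n := by
  have hF : ∀ k < 2*n, F (sym d) k = (F d (2*n-1-k)).flip := by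
    intro k hk
    rw [show sym d = comp d.reverse from rfl, F_comp _ k (by simp [hdl]; omega),
      F_reverse d k (by omega), hdl]
  constructor
  · intro hs k hk
    rw [F_append_left d _ k (by omega), F_append_left d _ (2*n-1-k) (by omega)]
    conv_lhs => rw [← hs]
    exact hF k hk
  · intro hS
    apply ext_F (by simp [sym, comp, hdl])
    intro k h
    have hk : k < 2*n := by simpa [sym, comp, hdl] using h
    have := hS k hk
    rw [F_append_left d _ k (by omega), F_append_left d _ (2*n-1-k) (by omega)] at this
    rw [hF k hk, ← this]


lemma nat_eq_of_zmod {L : ℕ} {a b : ℕ} (ha : a < L) (hb : b < L)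
    (h : (a : ZMod L) = b) : a = b := by
  have h1 := ZMod.val_cast_of_lt ha
  have h2 := ZMod.val_cast_of_lt hb
  rw [h] at h1; omega

lemma T_coprime (w : Word) (n p : ℕ) (hn : 1 ≤ n) (hp2 : p ≤ 2*n) (hT : Tp w n p) :
    Nat.Coprime p (2*n+1) := by
  by_contra hco
  set L := 2*n+1 with hL
  set g := Nat.gcd p L with hg
  have hgL : g ∣ L := Nat.gcd_dvd_right p L
  have hgp : g ∣ p := Nat.gcd_dvd_left p L
  have hg2 : 2 ≤ g := by
    have h0 : g ≠ 0 := by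
      intro h
      have h2 := Nat.eq_zero_of_gcd_eq_zero_right (hg.symm.trans h)
      omega
    have h1 : g ≠ 1 := fun h => hco h
    omega
  have hnd : ∀ t : ℕ, (t*p) % L ≠ 2*n - p := by
    intro t h
    have h1 : g ∣ (t*p) % L := (Nat.dvd_mod_iff hgL).2 (Dvd.dvd.mul_left hgp t)
    rw [h] at h1
    have h2 : g ∣ 2*n := by
      have := Nat.dvd_add h1 hgp
      rwa [Nat.sub_add_cancel hp2] at this
    have : g ∣ 1 := by
      have := Nat.dvd_sub hgL h2
      rwa [show L - 2*n = 1 by omega] at this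
    have := Nat.le_of_dvd one_pos this
    omega
  have chain : ∀ t : ℕ, F w ((t*p) % L) = if Even t then F w 0 else (F w 0).flip := by
    intro t
    induction t with
    | zero => simp [Nat.mod_eq_of_lt (show 0 < L by omega)]
    | succ t ih =>
      have hj1 : (t*p) % L < L := Nat.mod_lt _ (by omega)
      have hstep := hT.1 ((t*p) % L) hj1 (hnd t)
      rw [Nat.mod_add_mod, show t*p + p = (t+1)*p from (Nat.succ_mul t p).symm] at hstep
      rw [hstep, ih]
      rcases Nat.even_or_odd t with he | ho
      · simp [he, Nat.even_add_one, Letter.flip]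
      · simp [Nat.not_even_iff_odd.2 ho, Nat.even_add_one, flip_flip]
  obtain ⟨p', hp'⟩ := hgp
  have hdvd : (L/g) * p = L * p' := by
    have : g * (L / g) = L := Nat.mul_div_cancel' hgL
    calc (L/g) * p = (L/g) * (g * p') := by rw [← hp']
      _ = (g * (L/g)) * p' := by ring
      _ = L * p' := by rw [this]
  have h0 : ((L/g) * p) % L = 0 := by rw [hdvd]; exact Nat.mul_mod_right L p'
  have hlodd : ¬ Even (L/g) := by
    intro he
    have : Even L := by
      rw [← Nat.mul_div_cancel' hgL]
      exact he.mul_left g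
    rw [Nat.even_iff] at this
    omega
  have := chain (L/g)
  rw [h0, if_neg hlodd] at this
  exact flip_ne (F w 0) this.symm

lemma T_orb (w : Word) (n p : ℕ) (hn : 1 ≤ n) (hp2 : p ≤ 2*n) (hT : Tp w n p)
    (hFz : F w (2*n) = Letter.b) : Orb w n p := by
  have hco := T_coprime w n p hn hp2 hT
  set L := 2*n+1 with hL
  intro t
  induction t with
  | zero =>
    intro _
    simp [Nat.mod_eq_of_lt (show 2*n < L by omega), hFz]
  | succ t ih =>
    intro ht
    have iht := ih (by omega)
    have hj1 : (2*n + t*p) % L < L := Nat.mod_lt _ (by omega)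
    have hj2 : (2*n + t*p) % L ≠ 2*n - p := by
      intro h
      have h1 : 2*n + t*p ≡ 2*n - p [MOD L] := by
        rw [Nat.ModEq, h, Nat.mod_eq_of_lt (show 2*n - p < L by omega)]
      have h2 : 2*n + (t+1)*p ≡ 2*n + 0 [MOD L] := by
        have := h1.add_right p
        rw [Nat.sub_add_cancel hp2] at this
        calc 2*n + (t+1)*p = 2*n + t*p + p := by rw [Nat.succ_mul]; ring
          _ ≡ 2*n [MOD L] := this
          _ = 2*n + 0 := by ring
      have h3 : (t+1)*p ≡ 0 [MOD L] := Nat.ModEq.add_left_cancel' (2*n) h2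
      have h4 : L ∣ (t+1)*p := (Nat.modEq_zero_iff_dvd).1 h3
      have h5 : L ∣ (t+1) := (Nat.Coprime.symm hco).dvd_of_dvd_mul_right h4
      have := Nat.le_of_dvd (by omega) h5
      omega
    have hstep := hT.1 ((2*n + t*p) % L) hj1 hj2
    rw [Nat.mod_add_mod, show 2*n + t*p + p = 2*n + (t+1)*p by rw [Nat.succ_mul]; ring] at hstep
    rw [hstep, iht]
    rcases Nat.even_or_odd t with he | ho
    · simp [he, Nat.even_add_one, Letter.flip]
    · simp [Nat.not_even_iff_odd.2 ho, Nat.even_add_one, flip_flip, Letter.flip]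

lemma exists_rep (n p : ℕ) (hn : 1 ≤ n) (hco : Nat.Coprime p (2*n+1)) (k : ℕ)
    (hk : k < 2*n+1) :
    ∃ t, t < 2*n+1 ∧ (2*n + t*p) % (2*n+1) = k ∧ (t = 0 ↔ k = 2*n) := by
  haveI : NeZero (2*n+1) := ⟨by omega⟩
  set L := 2*n+1 with hL
  set u := ZMod.unitOfCoprime p hco with hu
  set x : ZMod L := ((k : ZMod L) - (2*n : ℕ)) * ((u⁻¹ : (ZMod L)ˣ) : ZMod L) with hx
  refine ⟨x.val, ZMod.val_lt x, ?_, ?_⟩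
  · have hcast : ((x.val : ℕ) : ZMod L) = x := (ZMod.natCast_val x).trans (ZMod.cast_id _ _)
    have hup : ((u⁻¹ : (ZMod L)ˣ) : ZMod L) * p = 1 := by
      have h1 : ((u : (ZMod L)ˣ) : ZMod L) = p := ZMod.coe_unitOfCoprime p hco
      rw [← h1, ← Units.val_mul, inv_mul_cancel, Units.val_one]
    have main : ((2*n + x.val * p : ℕ) : ZMod L) = (k : ZMod L) := by
      rw [Nat.cast_add, Nat.cast_mul x.val p, hcast, hx, mul_assoc, hup, mul_one]
      ring
    have : (((2*n + x.val * p) % L : ℕ) : ZMod L) = (k : ZMod L) := by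
      rw [ZMod.natCast_mod]; exact main
    exact nat_eq_of_zmod (Nat.mod_lt _ (by omega)) hk this
  · rw [ZMod.val_eq_zero, hx, Units.mul_left_eq_zero, sub_eq_zero]
    constructor
    · intro h; exact nat_eq_of_zmod hk (by omega) h
    · intro h; rw [h]


lemma even_two_n (n : ℕ) : Even (2*n) := ⟨n, by ring⟩

lemma not_even_L (n : ℕ) : ¬ Even (2*n+1) := by
  rintro ⟨m, hm⟩; omega

lemma orb_sym (w : Word) (n p : ℕ) (hn : 1 ≤ n) (hco : Nat.Coprime p (2*n+1))
    (ho : Orb w n p) : Sprop w n := by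
  haveI : NeZero (2*n+1) := ⟨by omega⟩
  intro k hk
  obtain ⟨t, ht, hrep, hiff⟩ := exists_rep n p hn hco k (by omega)
  have ht0 : t ≠ 0 := by intro h; have := hiff.1 h; omega
  have h1 : F w k = (if Even t then Letter.b else Letter.a) := by
    rw [← hrep]; exact ho t ht
  have hL0 : 2*(n : ZMod (2*n+1)) + 1 = 0 := by
    have := ZMod.natCast_self (2*n+1)
    push_cast at this
    exact this
  have hk' : 2*(n : ZMod (2*n+1)) + (t : ZMod (2*n+1))*(p : ZMod (2*n+1)) = (k : ZMod (2*n+1)) := by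
    rw [← hrep, ZMod.natCast_mod]; push_cast; ring
  have hidx : (2*n + (2*n+1-t)*p) % (2*n+1) = 2*n-1-k := by
    apply nat_eq_of_zmod (Nat.mod_lt _ (by omega)) (show 2*n-1-k < 2*n+1 by omega)
    rw [ZMod.natCast_mod, show (2*n-1-k) = 2*n - (1+k) by omega,
      Nat.cast_sub (show 1+k ≤ 2*n by omega), Nat.cast_add (2*n) ((2*n+1-t)*p),
      Nat.cast_mul (2*n+1-t) p, Nat.cast_sub (show t ≤ 2*n+1 by omega)]
    push_cast
    linear_combination ((p : ZMod (2*n+1)) + 1) * hL0 - hk'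
  have h2 : F w (2*n-1-k) = (if Even (2*n+1-t) then Letter.b else Letter.a) := by
    rw [← hidx]; exact ho (2*n+1-t) (by omega)
  have hpar : (if Even (2*n+1-t) then Letter.b else Letter.a)
      = (if Even t then Letter.b else Letter.a).flip := by
    have he : Even (2*n+1-t) ↔ ¬ Even t := by
      rw [Nat.even_sub (show t ≤ 2*n+1 by omega)]
      have := not_even_L n
      tauto
    by_cases h : Even t
    · rw [if_pos h, if_neg (by rw [he]; tauto)]; rfl
    · rw [if_neg h, if_pos (he.2 h)]; rfl
  rw [h1, h2, hpar, flip_flip]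

lemma orb_cut (w : Word) (n p : ℕ) (hn : 1 ≤ n) (hp2 : p ≤ 2*n)
    (hco : Nat.Coprime p (2*n+1)) (ho : Orb w n p) : CutP w n (2*n-p) := by
  haveI : NeZero (2*n+1) := ⟨by omega⟩
  intro k hk
  obtain ⟨t, ht, hrep, _⟩ := exists_rep n p hn hco k hk
  have hL0 : 2*(n : ZMod (2*n+1)) + 1 = 0 := by
    have := ZMod.natCast_self (2*n+1)
    push_cast at this
    exact this
  have hk' : 2*(n : ZMod (2*n+1)) + (t : ZMod (2*n+1))*(p : ZMod (2*n+1)) = (k : ZMod (2*n+1)) := by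
    rw [← hrep, ZMod.natCast_mod]; push_cast; ring
  have h1 : F w k = (if Even t then Letter.b else Letter.a) := by
    rw [← hrep]; exact ho t ht
  have hidx : (2*n-p + 2*n + (2*n+1) - k) % (2*n+1) = (2*n + (2*n-t)*p) % (2*n+1) := by
    apply nat_eq_of_zmod (Nat.mod_lt _ (by omega)) (Nat.mod_lt _ (by omega))
    rw [ZMod.natCast_mod, ZMod.natCast_mod,
      Nat.cast_sub (show k ≤ 2*n-p + 2*n + (2*n+1) by omega),
      Nat.cast_add (2*n-p+2*n) (2*n+1), Nat.cast_add (2*n-p) (2*n), Nat.cast_sub hp2,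
      Nat.cast_add (2*n) ((2*n-t)*p), Nat.cast_mul (2*n-t) p,
      Nat.cast_sub (show t ≤ 2*n by omega)]
    push_cast
    linear_combination (1 - (p : ZMod (2*n+1))) * hL0 + hk'
  rw [hidx, h1, ho (2*n-t) (by omega)]
  have he : Even (2*n-t) ↔ Even t := by
    rw [Nat.even_sub (show t ≤ 2*n by omega)]
    have := even_two_n n
    tauto
  by_cases h : Even t
  · rw [if_pos h, if_pos (he.2 h)]
  · rw [if_neg h, if_neg (by rw [he]; exact h)]

lemma cut_unique (w : Word) (n p i : ℕ) (hn : 1 ≤ n) (hp2 : p ≤ 2*n)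
    (hco : Nat.Coprime p (2*n+1)) (ho : Orb w n p)
    (hi : i ≤ 2*n) (hc : CutP w n i) : i = 2*n - p := by
  haveI : NeZero (2*n+1) := ⟨by omega⟩
  have hL0 : 2*(n : ZMod (2*n+1)) + 1 = 0 := by
    have := ZMod.natCast_self (2*n+1)
    push_cast at this
    exact this
  obtain ⟨β, hβ, hrepβ, _⟩ := exists_rep n p hn hco i (by omega)
  have hβ' : 2*(n : ZMod (2*n+1)) + (β : ZMod (2*n+1))*(p : ZMod (2*n+1)) = (i : ZMod (2*n+1)) := by
    rw [← hrepβ, ZMod.natCast_mod]; push_cast; ring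
  have h2 : F w i = Letter.b := by
    have h := hc i (by omega)
    rw [show (i + 2*n + (2*n+1) - i) = 2*n + (2*n+1)*1 by omega,
      Nat.add_mul_mod_self_left, Nat.mod_eq_of_lt (by omega)] at h
    have h0 := ho 0 (by omega)
    rw [show (2*n + 0*p) % (2*n+1) = 2*n by
      rw [Nat.mul_comm]; simp [Nat.mod_eq_of_lt (show 2*n < 2*n+1 by omega)]] at h0
    rw [h, h0]
    rfl
  have h3 : F w i = (if Even β then Letter.b else Letter.a) := by
    rw [← hrepβ]; exact ho β hβ
  have hβeven : Even β := by
    by_contra h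
    rw [if_neg h, h2] at h3
    exact absurd h3 (by decide)
  rcases Nat.eq_or_lt_of_le (show β ≤ 2*n by omega) with hβtop | hβlt
  · apply nat_eq_of_zmod (by omega) (show 2*n-p < 2*n+1 by omega)
    rw [Nat.cast_sub hp2]
    rw [hβtop] at hβ'
    push_cast at hβ' ⊢
    linear_combination ((p : ZMod (2*n+1))) * hL0 - hβ'
  · exfalso
    have h4 : F w ((2*n + (β+1)*p) % (2*n+1)) = Letter.a := by
      rw [ho (β+1) (by omega), if_neg (by rw [Nat.even_add_one]; tauto)]
    have h5 := hc ((2*n + (β+1)*p) % (2*n+1)) (Nat.mod_lt _ (by omega))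
    have hmlt : (2*n + (β+1)*p) % (2*n+1) < 2*n+1 := Nat.mod_lt _ (by omega)
    have hidx : (i + 2*n + (2*n+1) - (2*n + (β+1)*p) % (2*n+1)) % (2*n+1) = 2*n - p := by
      apply nat_eq_of_zmod (Nat.mod_lt _ (by omega)) (by omega)
      rw [ZMod.natCast_mod,
        Nat.cast_sub (show (2*n + (β+1)*p) % (2*n+1) ≤ i + 2*n + (2*n+1) by omega),
        ZMod.natCast_mod, Nat.cast_sub hp2]
      push_cast at hβ' ⊢
      linear_combination hL0 - hβ'
    rw [hidx] at h5
    have hidx2 : (2*n + (2*n)*p) % (2*n+1) = 2*n - p := by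
      apply nat_eq_of_zmod (Nat.mod_lt _ (by omega)) (by omega)
      rw [ZMod.natCast_mod, Nat.cast_sub hp2]
      push_cast
      linear_combination ((p : ZMod (2*n+1))) * hL0
    have h6 : F w (2*n-p) = Letter.b := by
      rw [← hidx2, ho (2*n) (by omega), if_pos (even_two_n n)]
    rw [h4, h6] at h5
    exact absurd h5 (by decide)

lemma cut_sym_T (w : Word) (n i : ℕ) (hn : 1 ≤ n) (hi1 : 1 ≤ i) (hi2 : i ≤ 2*n-1)
    (hs : Sprop w n) (hc : CutP w n i) (hFz : F w (2*n) = Letter.b) :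
    Tp w n (2*n-i) := by
  haveI : NeZero (2*n+1) := ⟨by omega⟩
  have hL0 : 2*(n : ZMod (2*n+1)) + 1 = 0 := by
    have := ZMod.natCast_self (2*n+1)
    push_cast at this
    exact this
  have he : 2*n - (2*n-i) = i := by omega
  constructor
  · intro j hj hne
    rw [he] at hne
    set m := (i + 2*n + (2*n+1) - j) % (2*n+1) with hm
    have hm1 : m < 2*n+1 := Nat.mod_lt _ (by omega)
    have hmcast : (m : ZMod (2*n+1)) = (i : ZMod (2*n+1)) + 2*n - j := by
      rw [hm, ZMod.natCast_mod, Nat.cast_sub (show j ≤ i + 2*n + (2*n+1) by omega)]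
      push_cast
      linear_combination hL0
    have hm2 : m ≠ 2*n := by
      intro h
      have : (i : ZMod (2*n+1)) = (j : ZMod (2*n+1)) := by
        have := hmcast
        rw [h] at this
        push_cast at this
        linear_combination - this
      exact hne ((nat_eq_of_zmod (by omega) hj this).symm)
    have hcj := hc j hj
    rw [← hm] at hcj
    have hsm := hs m (by omega)
    have hidx : 2*n-1-m = (j + (2*n-i)) % (2*n+1) := by
      apply nat_eq_of_zmod (by omega) (Nat.mod_lt _ (by omega))
      rw [ZMod.natCast_mod, show (2*n-1-m) = 2*n - (1+m) by omega,
        Nat.cast_sub (show 1+m ≤ 2*n by omega), Nat.cast_add j (2*n-i),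
        Nat.cast_sub (show i ≤ 2*n by omega)]
      push_cast
      rw [hmcast]
      push_cast
      linear_combination -hL0
    rw [hidx] at hsm
    rw [hcj, hsm, flip_flip]
  · rw [he]
    have h := hc i (by omega)
    rw [show (i + 2*n + (2*n+1) - i) = 2*n + (2*n+1)*1 by omega,
      Nat.add_mul_mod_self_left, Nat.mod_eq_of_lt (by omega)] at h
    rw [h, hFz]

lemma cut_2n (w : Word) (n : ℕ) (hn : 1 ≤ n) (hs : Sprop w n) (hc : CutP w n (2*n)) :
    False := by
  have h := hc 0 (by omega)
  rw [show (2*n + 2*n + (2*n+1) - 0) = (2*n-1) + (2*n+1)*2 by omega,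
    Nat.add_mul_mod_self_left, Nat.mod_eq_of_lt (by omega)] at h
  have h2 := hs (2*n-1) (by omega)
  rw [show 2*n-1-(2*n-1) = 0 by omega] at h2
  rw [h2] at h
  exact flip_ne _ h.symm

lemma cut_top (w : Word) (n : ℕ) (hc : CutP w n (2*n+1)) : CutP w n 0 := by
  intro k hk
  have h := hc k hk
  rw [show (2*n+1 + 2*n + (2*n+1) - k) = (0 + 2*n + (2*n+1) - k) + (2*n+1) by omega,
    Nat.add_mod_right] at h
  exact h


lemma step_flip (c : Letter) :
    (if c.flip = Letter.a then (1:ℤ) else -1) = -(if c = Letter.a then 1 else -1) := by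
  cases c <;> simp [Letter.flip]

section Heights

variable (n : ℕ) (d : Word)

lemma w_len (hdl : d.length = 2*n) : (d ++ [Letter.b]).length = 2*n+1 := by
  simp [hdl]

lemma take_w_d (hdl : d.length = 2*n) (j : ℕ) (hj : j ≤ 2*n) :
    (d ++ [Letter.b]).take j = d.take j :=
  List.take_append_of_le_length (by omega)

lemma H_nonneg (hd : IsDyck d) (hdl : d.length = 2*n) (j : ℕ) (hj : j ≤ 2*n) :
    0 ≤ delta ((d ++ [Letter.b]).take j) := by
  rw [take_w_d n d hdl j hj]
  exact hd.2 (d.take j) (List.take_prefix j d)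

lemma H_last (hd : IsDyck d) (hdl : d.length = 2*n) :
    delta ((d ++ [Letter.b]).take (2*n+1)) = -1 := by
  rw [show (2*n+1) = (d ++ [Letter.b]).length by simp [hdl], List.take_length,
    delta_append, hd.1]
  rfl

lemma F_last (hdl : d.length = 2*n) : F (d ++ [Letter.b]) (2*n) = Letter.b := by
  rw [F_append_right d [Letter.b] (2*n) (by omega) (by simp [hdl]), hdl, Nat.sub_self]
  rfl

lemma F_zero (hn : 1 ≤ n) (hd : IsDyck d) (hdl : d.length = 2*n) :
    F (d ++ [Letter.b]) 0 = Letter.a := by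
  have hne : d ≠ [] := by intro h; rw [h] at hdl; simp at hdl; omega
  obtain ⟨c, rest, rfl⟩ := List.exists_cons_of_ne_nil hne
  have h1 : F ((c :: rest) ++ [Letter.b]) 0 = c := rfl
  rw [h1]
  have := hd.2 [c] ⟨rest, rfl⟩
  cases c
  · rfl
  · rw [delta_single] at this
    simp at this
end Heights

section TtoGamma

variable (w : Word) (n p : ℕ)

lemma sumA (hw : w.length = 2*n+1) (hp1 : 1 ≤ p) (hp2 : p ≤ 2*n) (hT : Tp w n p) :
    ∀ x, x ≤ 2*n - p → delta (w.take (p+x)) = delta (w.take p) - delta (w.take x) := by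
  intro x
  induction x with
  | zero => intro _; simp [delta]
  | succ x ih =>
    intro hx
    have ihx := ih (by omega)
    rw [show p + (x+1) = (p+x)+1 by omega,
      take_succ_delta w (p+x) (by omega), take_succ_delta w x (by omega), ihx]
    have hTx := hT.1 x (by omega) (by omega)
    rw [Nat.mod_eq_of_lt (show x + p < 2*n+1 by omega), show x+p = p+x by omega] at hTx
    rw [hTx, step_flip]
    ring

lemma sumB (hw : w.length = 2*n+1) (hp1 : 1 ≤ p) (hp2 : p ≤ 2*n) (hT : Tp w n p) :
    ∀ y, y ≤ p → delta (w.take (2*n+1-p+y)) = delta (w.take (2*n+1-p)) - delta (w.take y) := by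
  intro y
  induction y with
  | zero => intro _; simp [delta]
  | succ y ih =>
    intro hy
    have ihy := ih (by omega)
    rw [show 2*n+1-p + (y+1) = (2*n+1-p+y)+1 by omega,
      take_succ_delta w (2*n+1-p+y) (by omega), take_succ_delta w y (by omega), ihy]
    have hTy := hT.1 (2*n+1-p+y) (by omega) (by omega)
    rw [show 2*n+1-p+y + p = (2*n+1) + y by omega, Nat.add_mod_left,
      Nat.mod_eq_of_lt (show y < 2*n+1 by omega)] at hTy
    have : F w (2*n+1-p+y) = (F w y).flip := by
      rw [hTy, flip_flip]
    rw [this, step_flip]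
    ring

lemma principal_of_T (d : Word) (hd : IsDyck d) (hdl : d.length = 2*n)
    (hw : w = d ++ [Letter.b]) (hp1 : 1 ≤ p) (hp2 : p ≤ 2*n) (hT : Tp w n p) :
    IsPrincipalPrefix (w.take p) w := by
  have hwl : w.length = 2*n+1 := by rw [hw]; exact w_len n d hdl
  have hnn : ∀ j, j ≤ 2*n → 0 ≤ delta (w.take j) := by
    intro j hj; rw [hw]; exact H_nonneg n d hd hdl j hj
  have hlast : delta (w.take (2*n+1)) = -1 := by rw [hw]; exact H_last n d hd hdl
  have hA := sumA w n p hwl hp1 hp2 hT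
  have hB := sumB w n p hwl hp1 hp2 hT
  have hLp : delta (w.take (2*n+1-p)) = delta (w.take p) - 1 := by
    have := hB p (le_refl p)
    rw [show 2*n+1-p+p = 2*n+1 by omega, hlast] at this
    omega
  have hmax : ∀ j, j ≤ 2*n+1 → delta (w.take j) ≤ delta (w.take p) := by
    intro j hj
    rcases Nat.lt_or_ge j p with h | h
    · have := hB j (by omega)
      have h2 := hnn (2*n+1-p+j) (by omega)
      omega
    · rcases Nat.lt_or_ge j (2*n+1) with h3 | h3
      · have := hA (j - p) (by omega)
        rw [show p + (j-p) = j by omega] at this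
        have h2 := hnn (j-p) (by omega)
        omega
      · have hj' : j = 2*n+1 := by omega
        rw [hj', hlast]
        have := hnn p (by omega)
        omega
  have hstrict : ∀ j, j < p → delta (w.take j) < delta (w.take p) := by
    intro j hj
    have := hB j (by omega)
    have h2 := hnn (2*n+1-p+j) (by omega)
    omega
  refine ⟨List.take_prefix p w, ?_, ?_⟩
  · intro q hq
    rw [List.prefix_iff_eq_take.1 hq]
    exact hmax q.length (by have := hq.length_le; omega)
  · intro q hq heq
    by_contra hcon
    push_neg at hcon
    have hql : q.length < p := by
      have : (w.take p).length = p := by rw [List.length_take]; omega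
      omega
    have := hstrict q.length hql
    rw [← List.prefix_iff_eq_take.1 hq] at this
    omega

lemma T_to_gamma (d : Word) (hn : 1 ≤ n) (hd : IsDyck d) (hdl : d.length = 2*n)
    (hw : w = d ++ [Letter.b]) (hp1 : 1 ≤ p) (hp2 : p ≤ 2*n) (hT : Tp w n p) :
    GammaRel w w := by
  have hwl : w.length = 2*n+1 := by rw [hw]; exact w_len n d hdl
  refine ⟨w.take p, d.drop p, principal_of_T w n p d hd hdl hw hp1 hp2 hT, ?_, ?_⟩
  · have h1 : w.take p = d.take p := by rw [hw]; exact take_w_d n d hdl p hp2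
    rw [h1, List.take_append_drop]
    exact hw
  · have h1 : (d.drop p).length = 2*n - p := by rw [List.length_drop, hdl]
    have h2 : (w.take p).length = p := by rw [List.length_take]; omega
    apply ext_F
    · simp [comp, h1, hwl, h2]
      omega
    intro k hk
    rw [hwl] at hk
    have hlA : (comp (d.drop p)).length = 2*n - p := by simp [comp, hdl]
    have hlC : (comp (w.take p)).length = p := by simp [comp, hwl]; omega
    rcases Nat.lt_trichotomy k (2*n-p) with hklt | hkeq | hkgt
    · have e1 : F (comp (d.drop p) ++ [Letter.b] ++ comp (w.take p)) k
          = F (comp (d.drop p) ++ [Letter.b]) k :=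
        F_append_left _ _ k (by simp [hlA]; omega)
      have e2 : F (comp (d.drop p) ++ [Letter.b]) k = F (comp (d.drop p)) k :=
        F_append_left _ _ k (by omega)
      have e3 : F (comp (d.drop p)) k = (F (d.drop p) k).flip := F_comp _ k (by omega)
      have e4 : F (d.drop p) k = F d (p + k) := F_drop d p k (by omega)
      have e5 : F d (p + k) = F w (p + k) := by
        rw [hw, F_append_left d _ (p+k) (by omega)]
      have hTk := hT.1 k (by omega) (by omega)
      rw [Nat.mod_eq_of_lt (show k + p < 2*n+1 by omega)] at hTk
      rw [e1, e2, e3, e4, e5, show p + k = k + p by omega, hTk, flip_flip]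
    · have e1 : F (comp (d.drop p) ++ [Letter.b] ++ comp (w.take p)) k
          = F (comp (d.drop p) ++ [Letter.b]) k :=
        F_append_left _ _ k (by simp [hlA]; omega)
      have e2 : F (comp (d.drop p) ++ [Letter.b]) k = F [Letter.b] (k - (2*n-p)) := by
        rw [F_append_right _ _ k (by omega) (by simp [hlA]; omega), hlA]
      rw [e1, e2, hkeq, Nat.sub_self]
      exact hT.2
    · have e1 : F (comp (d.drop p) ++ [Letter.b] ++ comp (w.take p)) k
          = F (comp (w.take p)) (k - (2*n-p+1)) := by
        rw [F_append_right _ _ k (by simp [hlA]; omega) (by simp [hlA, hlC]; omega)]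
        congr 1
        simp [hlA]
      have e2 : F (comp (w.take p)) (k - (2*n-p+1)) = (F (w.take p) (k - (2*n-p+1))).flip :=
        F_comp _ _ (by omega)
      have e3 : F (w.take p) (k - (2*n-p+1)) = F w (k - (2*n-p+1)) :=
        F_take w p _ (by omega) (by omega)
      have hTk := hT.1 k (by omega) (by omega)
      rw [show k + p = (k + p - (2*n+1)) + (2*n+1)*1 by omega, Nat.add_mul_mod_self_left,
        Nat.mod_eq_of_lt (show k + p - (2*n+1) < 2*n+1 by omega)] at hTk
      rw [e1, e2, e3, show k - (2*n-p+1) = k + p - (2*n+1) by omega, hTk, flip_flip]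

lemma gamma_to_T (d : Word) (hn : 1 ≤ n) (hd : IsDyck d)
    (hdl : d.length = 2*n) (hw : w = d ++ [Letter.b]) (hg : GammaRel w w) :
    ∃ p, 1 ≤ p ∧ p ≤ 2*n - 1 ∧ Tp w n p := by
  obtain ⟨u, v, hpp, h1, h2⟩ := hg
  have hwl : w.length = 2*n+1 := by rw [hw]; exact w_len n d hdl
  set q := u.length with hq
  have hlen : q + v.length + 1 = 2*n+1 := by
    have := congrArg List.length h1
    simp [hwl] at this
    omega
  have hq2 : q ≤ 2*n := by omega
  have hvl : v.length = 2*n - q := by omega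
  have hF0 : F w 0 = Letter.a := by rw [hw]; exact F_zero n d hn hd hdl
  have hq1 : 1 ≤ q := by
    by_contra h
    have hu : u = [] := List.length_eq_zero_iff.1 (by omega)
    have h3 := hpp.2.1 (w.take 1) (List.take_prefix 1 w)
    have hne : w ≠ [] := by intro he; rw [he] at hwl; simp at hwl
    obtain ⟨c, rest, hc⟩ := List.exists_cons_of_ne_nil hne
    have ht1 : w.take 1 = [c] := by rw [hc]; rfl
    have hc0 : F w 0 = c := by rw [hc]; rfl
    rw [ht1, delta_single, hc0.symm.trans hF0] at h3
    rw [hu] at h3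
    simp [delta] at h3
  have hu : u = w.take q := List.prefix_iff_eq_take.1 hpp.1
  have hlA : (comp v).length = 2*n - q := by simp [comp, hvl]
  have hlC : (comp u).length = q := by simp [comp, hq]
  have key : ∀ k, F w k = F (comp v ++ [Letter.b] ++ comp u) k :=
    fun k => congrArg (fun x => F x k) h2
  have hfv : ∀ j, j < 2*n - q → F v j = F w (q + j) := by
    intro j hj
    rw [h1, F_append_left (u++v) _ (q+j) (by simp [hvl]; omega),
      F_append_right u v (q+j) (by omega) (by simp [hvl]; omega)]
    congr 1
    omega
  have hTp : Tp w n q := by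
    constructor
    · intro j hj hne
      rcases Nat.lt_trichotomy j (2*n-q) with hjlt | hjeq | hjgt
      · have e0 := key j
        rw [F_append_left _ _ j (by simp [hlA]; omega),
          F_append_left _ _ j (by omega),
          F_comp v j (by omega), hfv j hjlt] at e0
        rw [Nat.mod_eq_of_lt (show j + q < 2*n+1 by omega),
          show j + q = q + j by omega, e0, flip_flip]
      · exact absurd hjeq hne
      · have e0 := key j
        have hj2n : j ≤ 2*n := by omega
        rw [F_append_right _ _ j (by simp [hlA]; omega) (by simp [hlA, hlC]; omega),
          show (comp v ++ [Letter.b]).length = 2*n-q+1 by simp [hlA],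
          F_comp u _ (by omega),
          hu, F_take w q _ (by omega) (by omega)] at e0
        rw [show j + q = (j + q - (2*n+1)) + (2*n+1)*1 by omega, Nat.add_mul_mod_self_left,
          Nat.mod_eq_of_lt (show j + q - (2*n+1) < 2*n+1 by omega),
          show j + q - (2*n+1) = j - (2*n-q+1) by omega]
        rw [e0, flip_flip]
    · have e0 := key (2*n-q)
      rw [F_append_left _ _ (2*n-q) (by simp [hlA]),
        F_append_right _ _ (2*n-q) (by omega) (by simp [hlA]), hlA,
        Nat.sub_self] at e0
      exact e0
  have hqne : q ≠ 2*n := by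
    intro h
    have := hTp.2
    rw [h, Nat.sub_self] at this
    rw [hF0] at this
    exact absurd this (by decide)
  exact ⟨q, hq1, by omega, hTp⟩

end TtoGamma

end FGaux

/-- Characterization of F_γ: a Dyck word d of length 2n (n ≥ 1) satisfies
    d·b ∈ F_γ iff d is symmetric and d·b is uniquely decomposable into two
    palindromes. -/
theorem fgamma_characterization (n : ℕ) (hn : 1 ≤ n) (d : Word)
    (hd : IsDyck d) (hdl : d.length = 2 * n) :
    InFgamma (d ++ [Letter.b]) ↔
      (sym d = d ∧
        ∃! π : Word × Word, Palindrome π.1 ∧ Palindrome π.2 ∧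
          d ++ [Letter.b] = π.1 ++ π.2) := by
  set w := d ++ [Letter.b] with hw
  have hwl : w.length = 2*n+1 := FGaux.w_len n d hdl
  have hFz : FGaux.F w (2*n) = Letter.b := FGaux.F_last n d hdl
  constructor
  · rintro ⟨n', hn', hInD, hg⟩
    obtain ⟨p, hp1, hp2, hT⟩ := FGaux.gamma_to_T w n d hn hd hdl hw hg
    have hco := FGaux.T_coprime w n p hn (by omega) hT
    have horb := FGaux.T_orb w n p hn (by omega) hT hFz
    have hS := FGaux.orb_sym w n p hn hco horb
    constructor
    · exact (FGaux.sym_iff d n hdl).2 hS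
    · have hcut := FGaux.orb_cut w n p hn (by omega) hco horb
      have hpal := (FGaux.cut_iff w n (2*n-p) hwl (by omega)).2 hcut
      refine ⟨(w.take (2*n-p), w.drop (2*n-p)),
        ⟨hpal.1, hpal.2, (List.take_append_drop _ w).symm⟩, ?_⟩
      rintro ⟨π₁, π₂⟩ ⟨hpal1, hpal2, heq⟩
      set i := π₁.length with hi
      have hπ1 : π₁ = w.take i := by rw [heq]; exact List.take_left.symm
      have hπ2 : π₂ = w.drop i := by rw [heq]; exact List.drop_left.symm
      have hiL : i ≤ 2*n+1 := by
        have := congrArg List.length heq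
        simp [hwl] at this
        omega
      rcases Nat.lt_or_ge i (2*n+1) with hilt | hige
      · have hcuti : FGaux.CutP w n i :=
          (FGaux.cut_iff w n i hwl (by omega)).1 ⟨hπ1 ▸ hpal1, hπ2 ▸ hpal2⟩
        have hieq := FGaux.cut_unique w n p i hn (by omega) hco horb (by omega) hcuti
        rw [hπ1, hπ2, hieq]
      · exfalso
        have hieq : i = 2*n+1 := by omega
        have hcuti : FGaux.CutP w n (2*n+1) :=
          (FGaux.cut_iff w n (2*n+1) hwl (le_refl _)).1
            ⟨by rw [← hieq]; exact hπ1 ▸ hpal1, by rw [← hieq]; exact hπ2 ▸ hpal2⟩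
        have hcut0 := FGaux.cut_top w n hcuti
        have := FGaux.cut_unique w n p 0 hn (by omega) hco horb (by omega) hcut0
        omega
  · rintro ⟨hsym, hEU⟩
    have hS := (FGaux.sym_iff d n hdl).1 hsym
    obtain ⟨⟨π₁, π₂⟩, ⟨hpal1, hpal2, heq⟩, huniq⟩ := hEU
    set i := π₁.length with hi
    have hπ1 : π₁ = w.take i := by rw [heq]; exact List.take_left.symm
    have hπ2 : π₂ = w.drop i := by rw [heq]; exact List.drop_left.symm
    have hlen : 2*n+1 = i + π₂.length := by
      have := congrArg List.length heq
      simp [hwl] at this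
      omega
    have hwne : w ≠ [] := by
      intro h
      rw [h] at hwl
      simp at hwl
    have hi0 : i ≠ 0 := by
      intro h
      have h1 : π₁ = [] := List.length_eq_zero_iff.1 h
      have h2 : π₂ = w := by rw [heq, h1, List.nil_append]
      have hwpal : Palindrome w := h2 ▸ hpal2
      have := huniq (w, ([] : Word))
        ⟨hwpal, (by rfl : Palindrome ([] : Word)), (List.append_nil w).symm⟩
      rw [Prod.mk.injEq] at this
      exact hwne (this.1.trans h1)
    have hiT : i ≠ 2*n+1 := by
      intro h
      have h2 : π₂ = [] := List.length_eq_zero_iff.1 (by omega)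
      have h1 : π₁ = w := by rw [heq, h2, List.append_nil]
      have hwpal : Palindrome w := h1 ▸ hpal1
      have := huniq (([] : Word), w)
        ⟨(by rfl : Palindrome ([] : Word)), hwpal, (List.nil_append w).symm⟩
      rw [Prod.mk.injEq] at this
      exact hwne (h1 ▸ this.1.symm)
    have hcuti : FGaux.CutP w n i :=
      (FGaux.cut_iff w n i hwl (by omega)).1 ⟨hπ1 ▸ hpal1, hπ2 ▸ hpal2⟩
    have hi2n : i ≠ 2*n := fun h => FGaux.cut_2n w n hn hS (h ▸ hcuti)
    have hT := FGaux.cut_sym_T w n i hn (by omega) (by omega) hS hcuti hFz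
    have hg := FGaux.T_to_gamma w n (2*n-i) d hn hd hdl hw (by omega) (by omega) hT
    exact ⟨n, hn, ⟨d, hd, hdl, hw⟩, hg⟩
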